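/- Fix N ≥ 2, 𝔭, 𝔮 > 0, δ ∈ ℝ, and β₁,…,β_N ≥ 0. Arrange {1,…,N} in a cycle and take contagion rates ρ_{j,i} equal to 𝔭 if i is the clockwise neighbor of j, 𝔮 if i is the counterclockwise neighbor of j, and 0 otherwise. For a set of n consecutive cycle elements S(i) starting at 1+(i mod N), n < N, the sum over all orderings π of S(i) of the product 𝓛̂^π(n) = ∏_{k=0}^{n−1} 𝓛_{F_k^π}(π_{k+1}) (where 𝓛_E(i) = e^{−δ|E|} ∑_{j∈E} ρ_{j,i} for E ≠ ∅ and 𝓛_∅(i)=β_i, and F_k^π = {π₁,…,π_k}) equals e^{−δ n(n−1)/2} ∑_{j=0}^{n−1} β_{1+((i+j) mod N)} C(n−1,j) 𝔭^{n−1−j} 𝔮^{j}. -/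

import Mathlib

open Finset

/-- Contagion rate `𝓛_E(i)`: `β_i` if no obligor has defaulted, and
`e^{−δ|E|} ∑_{j∈E} ρ_{j i}` if the set `E ≠ ∅` of obligors has defaulted. -/
noncomputable def contagionL {ι : Type*} [DecidableEq ι] (β : ι → ℝ) (δ : ℝ)
    (ρ : ι → ι → ℝ) (E : Finset ι) (i : ι) : ℝ :=
  if E = ∅ then β i else Real.exp (-δ * (E.card : ℝ)) * ∑ j ∈ E, ρ j i

/-- `𝓛̂^π(n) = ∏_{k=0}^{n−1} 𝓛_{F_k^π}(π_{k+1})`, the product of contagion factors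
along the default ordering `π` (given as a list), started from the defaulted set `E`. -/
noncomputable def contagionLhat {ι : Type*} [DecidableEq ι] (β : ι → ℝ) (δ : ℝ)
    (ρ : ι → ι → ℝ) : Finset ι → List ι → ℝ
  | _, [] => 1
  | E, i :: L => contagionL β δ ρ E i * contagionLhat β δ ρ (insert i E) L

/-- Near-neighbor contagion rates on the cycle `ZMod N`:
`𝔭` to the clockwise neighbor, `𝔮` to the counterclockwise neighbor, `0` otherwise. -/
noncomputable def nnRho {N : ℕ} (p q : ℝ) (j i : ZMod N) : ℝ :=
  if i = j + 1 then p else if i = j - 1 then q else 0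

/-! ### Auxiliary: sums over the finset of permutations -/

noncomputable def permsF {ι : Type*} [DecidableEq ι] (S : Finset ι) : Finset (List ι) :=
  S.toList.permutations.toFinset

lemma mem_permsF {ι : Type*} [DecidableEq ι] {S : Finset ι} {L : List ι} :
    L ∈ permsF S ↔ (L : Multiset ι) = S.val := by
  rw [permsF, List.mem_toFinset, List.mem_permutations, ← Multiset.coe_eq_coe,
    Finset.toList, Multiset.coe_toList]

lemma sum_permsF {ι : Type*} [DecidableEq ι] (S : Finset ι) (f : List ι → ℝ) :
    ((S.toList.permutations).map f).sum = ∑ L ∈ permsF S, f L := by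
  rw [permsF, List.sum_toFinset _ (List.nodup_permutations _ S.nodup_toList)]

lemma permsF_empty {ι : Type*} [DecidableEq ι] :
    permsF (∅ : Finset ι) = {[]} := by
  ext L; rw [mem_permsF]; simp [Multiset.coe_eq_zero]

lemma permsF_rec {ι : Type*} [DecidableEq ι] [Inhabited ι] (S : Finset ι) (hS : S.Nonempty)
    (f : List ι → ℝ) :
    ∑ L ∈ permsF S, f L = ∑ i ∈ S, ∑ T ∈ permsF (S.erase i), f (i :: T) := by
  have key : ∀ L ∈ permsF S, L ≠ [] := by
    intro L hL
    rw [mem_permsF] at hL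
    intro h; subst h
    exact hS.ne_empty (Finset.val_eq_zero.mp hL.symm) |>.elim
  rw [Finset.sum_sigma' S (fun i => permsF (S.erase i)) (fun i T => f (i :: T))]
  refine (Finset.sum_bij' (fun p (_ : p ∈ S.sigma fun i => permsF (S.erase i)) => p.1 :: p.2)
    (fun L _ => ⟨L.head!, L.tail⟩) ?_ ?_ ?_ ?_ ?_).symm
  · rintro ⟨i, T⟩ hp
    simp only [Finset.mem_sigma, mem_permsF] at hp
    rw [mem_permsF]
    obtain ⟨hi, hT⟩ := hp
    rw [← Multiset.cons_coe, hT, Finset.erase_val, Multiset.cons_erase (by simpa using hi)]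
  · intro L hL
    have hne := key L hL
    rw [mem_permsF] at hL
    simp only [Finset.mem_sigma, mem_permsF]
    have hcons : L.head! :: L.tail = L := List.cons_head!_tail hne
    constructor
    · rw [← Finset.mem_val, ← hL, ← hcons]; exact List.mem_cons_self
    · have hSv : S.val = L.head! ::ₘ (L.tail : Multiset ι) := by
        rw [← hL, Multiset.cons_coe]; conv_lhs => rw [← hcons]
      rw [Finset.erase_val, hSv, Multiset.erase_cons_head]
  · rintro ⟨i, T⟩ hp; simp
  · intro L hL; exact List.cons_head!_tail (key L hL)
  · rintro ⟨i, T⟩ hp; rfl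

/-! ### Auxiliary: consecutive points on the cycle -/

/-- The `k`-th point of the arc starting at `a`. -/
def eo {N : ℕ} (a : ZMod N) (k : ℕ) : ZMod N := a + (k : ZMod N)

lemma eo_inj {N : ℕ} [NeZero N] (a : ZMod N) {k k' : ℕ} (hk : k < N) (hk' : k' < N) :
    eo a k = eo a k' ↔ k = k' := by
  constructor
  · intro h
    have h2 : (k : ZMod N) = (k' : ZMod N) := add_left_cancel h
    have h3 := congrArg ZMod.val h2
    rwa [ZMod.val_natCast, ZMod.val_natCast, Nat.mod_eq_of_lt hk, Nat.mod_eq_of_lt hk'] at h3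
  · rintro rfl; rfl

lemma injOn_eo {N : ℕ} [NeZero N] (a : ZMod N) {A : Finset ℕ} (hA : ∀ x ∈ A, x < N) :
    ∀ x ∈ A, ∀ y ∈ A, eo a x = eo a y → x = y := by
  intro x hx y hy h
  exact (eo_inj a (hA x hx) (hA y hy)).mp h

lemma mem_image_eo {N : ℕ} [NeZero N] (a : ZMod N) {A : Finset ℕ} (hA : ∀ x ∈ A, x < N)
    {u : ℕ} (hu : u < N) : eo a u ∈ A.image (eo a) ↔ u ∈ A := by
  constructor
  · rintro h
    obtain ⟨x, hx, hxe⟩ := Finset.mem_image.mp h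
    rwa [(eo_inj a (hA x hx) hu).mp hxe] at hx
  · intro h; exact Finset.mem_image_of_mem _ h

lemma erase_image_eo {N : ℕ} [NeZero N] (a : ZMod N) {A : Finset ℕ} (hA : ∀ x ∈ A, x < N)
    {x : ℕ} (hx : x < N) : (A.image (eo a)).erase (eo a x) = (A.erase x).image (eo a) := by
  ext y
  simp only [Finset.mem_erase, Finset.mem_image]
  constructor
  · rintro ⟨hne, z, hz, rfl⟩
    exact ⟨z, ⟨fun h => hne (by rw [h]), hz⟩, rfl⟩
  · rintro ⟨z, ⟨hzx, hz⟩, rfl⟩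
    exact ⟨fun h => hzx ((eo_inj a (hA z hz) hx).mp h), z, hz, rfl⟩

lemma eo_succ {N : ℕ} (a : ZMod N) (k : ℕ) : eo a (k + 1) = eo a k + 1 := by
  simp [eo, Nat.cast_add]; ring

lemma nnRho_eo {N : ℕ} [NeZero N] (p q : ℝ) (a : ZMod N) {u v : ℕ}
    (hu : u + 1 < N) (hv : v + 1 < N) :
    nnRho p q (eo a v) (eo a u) = if u = v + 1 then p else if u + 1 = v then q else 0 := by
  have h1 : (eo a u = eo a v + 1) ↔ u = v + 1 := by
    rw [← eo_succ, eo_inj a (by omega) hv]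
  have h2 : (eo a u = eo a v - 1) ↔ u + 1 = v := by
    rw [eq_sub_iff_add_eq, ← eo_succ, eo_inj a hu (by omega)]
  rw [nnRho]
  by_cases hc1 : u = v + 1
  · rw [if_pos (h1.mpr hc1), if_pos hc1]
  · rw [if_neg (fun h => hc1 (h1.mp h)), if_neg hc1]
    by_cases hc2 : u + 1 = v
    · rw [if_pos (h2.mpr hc2), if_pos hc2]
    · rw [if_neg (fun h => hc2 (h2.mp h)), if_neg hc2]

lemma rho_sum_eo {N : ℕ} [NeZero N] (p q : ℝ) (a : ZMod N) {u s m : ℕ}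
    (hm : 1 ≤ m) (hB : s + m < N) (hu : u + 1 < N) (huI : u ∉ Finset.Ico s (s + m)) :
    ∑ v ∈ Finset.Ico s (s + m), nnRho p q (eo a v) (eo a u)
      = (if u + 1 = s then q else 0) + (if u = s + m then p else 0) := by
  have huI' : ¬ (s ≤ u ∧ u < s + m) := by simpa [Finset.mem_Ico] using huI
  have hterm : ∀ v ∈ Finset.Ico s (s + m),
      nnRho p q (eo a v) (eo a u)
        = (if u + 1 = v then q else 0) + (if u = v + 1 then p else 0) := by
    intro v hv
    rw [Finset.mem_Ico] at hv
    rw [nnRho_eo p q a hu (by omega)]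
    by_cases hc1 : u = v + 1
    · rw [if_pos hc1, if_pos hc1, if_neg (by omega), zero_add]
    · rw [if_neg hc1, if_neg hc1, add_zero]
  rw [Finset.sum_congr rfl hterm, Finset.sum_add_distrib]
  congr 1
  · rw [Finset.sum_ite_eq]
    have : (u + 1 ∈ Finset.Ico s (s + m)) ↔ u + 1 = s := by
      rw [Finset.mem_Ico]; omega
    by_cases hc : u + 1 = s
    · rw [if_pos (this.mpr hc), if_pos hc]
    · rw [if_neg (fun h => hc (this.mp h)), if_neg hc]
  · by_cases hc : u = s + m
    · rw [if_pos hc]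
      have hcong : ∀ v ∈ Finset.Ico s (s + m),
          (if u = v + 1 then p else 0) = (if s + m - 1 = v then p else 0) := by
        intro v hv; rw [Finset.mem_Ico] at hv
        congr 1
        simp only [eq_iff_iff]; omega
      rw [Finset.sum_congr rfl hcong, Finset.sum_ite_eq, if_pos (by rw [Finset.mem_Ico]; omega)]
    · rw [if_neg hc]
      apply Finset.sum_eq_zero
      intro v hv; rw [Finset.mem_Ico] at hv
      rw [if_neg (by omega)]

/-! ### The key induction -/

lemma keyC {N : ℕ} [NeZero N] (p q δ : ℝ) (β : ZMod N → ℝ) (a : ZMod N) :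
    ∀ r s m t : ℕ, s + t = r → 1 ≤ m → s + m + t < N →
    ∑ L ∈ permsF (((Finset.range s) ∪ (Finset.Ico (s + m) (s + m + t))).image (eo a)),
        contagionLhat β δ (nnRho p q) ((Finset.Ico s (s + m)).image (eo a)) L
      = Real.exp (-δ * (∑ k ∈ Finset.Ico m (m + (s + t)), (k : ℝ)))
          * ((s + t).choose s : ℝ) * p ^ t * q ^ s := by
  intro r
  induction r with
  | zero =>
    intro s m t hst hm hlt
    obtain ⟨hs, ht⟩ : s = 0 ∧ t = 0 := by omega
    subst hs; subst ht
    simp [permsF_empty, contagionLhat]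
  | succ r IH =>
    intro s m t hst hm hlt
    set U : Finset ℕ := (Finset.range s) ∪ (Finset.Ico (s + m) (s + m + t)) with hUdef
    have hUmem : ∀ x, x ∈ U ↔ (x < s ∨ (s + m ≤ x ∧ x < s + m + t)) := by
      intro x; simp [hUdef, Finset.mem_union, Finset.mem_range, Finset.mem_Ico]
    have hUb : ∀ x ∈ U, x < N := by intro x hx; rw [hUmem] at hx; omega
    have hFb : ∀ x ∈ Finset.Ico s (s + m), x < N := by
      intro x hx; rw [Finset.mem_Ico] at hx; omega
    have hUne : U.Nonempty := by
      rcases Nat.eq_zero_or_pos s with hs | hs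
      · exact ⟨s + m, by rw [hUmem]; omega⟩
      · exact ⟨0, by rw [hUmem]; omega⟩
    have hFne : ((Finset.Ico s (s + m)).image (eo a)) ≠ ∅ := by
      apply Finset.Nonempty.ne_empty
      exact Finset.Nonempty.image ⟨s, by rw [Finset.mem_Ico]; omega⟩ _
    have hFcard : ((Finset.Ico s (s + m)).image (eo a)).card = m := by
      rw [Finset.card_image_of_injOn (fun x hx y hy h => injOn_eo a hFb x hx y hy h),
        Nat.card_Ico]
      omega
    -- the value of the first contagion factor
    have hcl : ∀ u ∈ U, contagionL β δ (nnRho p q) ((Finset.Ico s (s + m)).image (eo a)) (eo a u)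
        = Real.exp (-δ * (m : ℝ)) *
          ((if u + 1 = s then q else 0) + (if u = s + m then p else 0)) := by
      intro u hu
      rw [hUmem] at hu
      rw [contagionL, if_neg hFne, hFcard,
        Finset.sum_image (fun x hx y hy h => injOn_eo a hFb x hx y hy h),
        rho_sum_eo p q a hm (by omega) (by omega) (by rw [Finset.mem_Ico]; omega)]
    rw [permsF_rec _ (hUne.image _)]
    rw [Finset.sum_image (fun x hx y hy h => injOn_eo a hUb x hx y hy h)]
    simp only [contagionLhat]
    have hsum0 : ∀ u ∈ U, ¬ (u + 1 = s ∨ u = s + m) →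
        (∑ T ∈ permsF ((U.image (eo a)).erase (eo a u)),
          (contagionL β δ (nnRho p q) ((Finset.Ico s (s + m)).image (eo a)) (eo a u) *
            contagionLhat β δ (nnRho p q)
              (insert (eo a u) ((Finset.Ico s (s + m)).image (eo a))) T)) = 0 := by
      intro u hu hP
      push_neg at hP
      apply Finset.sum_eq_zero
      intro T _
      rw [hcl u hu, if_neg hP.1, if_neg hP.2]
      ring
    -- the two nonzero terms
    have hgq : 1 ≤ s →
        (∑ T ∈ permsF ((U.image (eo a)).erase (eo a (s - 1))),
          (contagionL β δ (nnRho p q) ((Finset.Ico s (s + m)).image (eo a)) (eo a (s - 1)) *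
            contagionLhat β δ (nnRho p q)
              (insert (eo a (s - 1)) ((Finset.Ico s (s + m)).image (eo a))) T))
        = Real.exp (-δ * (∑ k ∈ Finset.Ico m (m + (s + t)), (k : ℝ)))
            * (r.choose (s - 1) : ℝ) * p ^ t * q ^ s := by
      intro hs
      have h1 : insert (eo a (s - 1)) ((Finset.Ico s (s + m)).image (eo a))
          = (Finset.Ico (s - 1) ((s - 1) + (m + 1))).image (eo a) := by
        rw [show Finset.Ico (s - 1) ((s - 1) + (m + 1)) = insert (s - 1) (Finset.Ico s (s + m))
          by ext x; simp [Finset.mem_Ico, Finset.mem_insert]; omega]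
        rw [Finset.image_insert]
      have h2 : (U.image (eo a)).erase (eo a (s - 1))
          = ((Finset.range (s - 1)) ∪
              (Finset.Ico ((s - 1) + (m + 1)) ((s - 1) + (m + 1) + t))).image (eo a) := by
        rw [erase_image_eo a hUb (by omega)]
        congr 1
        ext x
        simp only [Finset.mem_erase, hUmem, Finset.mem_union, Finset.mem_range, Finset.mem_Ico]
        constructor
        · rintro ⟨hne, h⟩
          rcases h with h | h
          · left; omega
          · right; omega
        · intro h; rcases h with h | h
          · constructor
            · omega
            · left; omega
          · constructor
            · omega
            · right; omega
      rw [h1, h2, hcl (s - 1) (by rw [hUmem]; omega), if_pos (by omega), if_neg (by omega)]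
      rw [← Finset.mul_sum, IH (s - 1) (m + 1) t (by omega) (by omega) (by omega)]
      rw [show (s - 1) + t = r from by omega]
      rw [show (m + 1) + r = m + (s + t) from by omega]
      rw [Finset.sum_eq_sum_Ico_succ_bot (show m < m + (s + t) by omega) (fun k => (k : ℝ))]
      rw [mul_add (-δ), Real.exp_add,
        show q ^ s = q ^ (s - 1) * q from by rw [← pow_succ]; congr 1; omega]
      ring
    have hgp : 1 ≤ t →
        (∑ T ∈ permsF ((U.image (eo a)).erase (eo a (s + m))),
          (contagionL β δ (nnRho p q) ((Finset.Ico s (s + m)).image (eo a)) (eo a (s + m)) *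
            contagionLhat β δ (nnRho p q)
              (insert (eo a (s + m)) ((Finset.Ico s (s + m)).image (eo a))) T))
        = Real.exp (-δ * (∑ k ∈ Finset.Ico m (m + (s + t)), (k : ℝ)))
            * (r.choose s : ℝ) * p ^ t * q ^ s := by
      intro ht
      have h1 : insert (eo a (s + m)) ((Finset.Ico s (s + m)).image (eo a))
          = (Finset.Ico s (s + (m + 1))).image (eo a) := by
        rw [show Finset.Ico s (s + (m + 1)) = insert (s + m) (Finset.Ico s (s + m))
          by ext x; simp [Finset.mem_Ico, Finset.mem_insert]; omega]
        rw [Finset.image_insert]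
      have h2 : (U.image (eo a)).erase (eo a (s + m))
          = ((Finset.range s) ∪
              (Finset.Ico (s + (m + 1)) (s + (m + 1) + (t - 1)))).image (eo a) := by
        rw [erase_image_eo a hUb (by omega)]
        congr 1
        ext x
        simp only [Finset.mem_erase, hUmem, Finset.mem_union, Finset.mem_range, Finset.mem_Ico]
        constructor
        · rintro ⟨hne, h⟩
          rcases h with h | h
          · left; omega
          · right; omega
        · intro h; rcases h with h | h
          · constructor
            · omega
            · left; omega
          · constructor
            · omega
            · right; omega
      rw [h1, h2, hcl (s + m) (by rw [hUmem]; omega), if_neg (by omega), if_pos rfl]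
      rw [← Finset.mul_sum, IH s (m + 1) (t - 1) (by omega) (by omega) (by omega)]
      rw [show s + (t - 1) = r from by omega]
      rw [show (m + 1) + r = m + (s + t) from by omega]
      rw [Finset.sum_eq_sum_Ico_succ_bot (show m < m + (s + t) by omega) (fun k => (k : ℝ))]
      rw [mul_add (-δ), Real.exp_add,
        show p ^ t = p ^ (t - 1) * p from by rw [← pow_succ]; congr 1; omega]
      ring
    -- restrict to the two boundary points
    rw [← Finset.sum_filter_of_ne (p := fun u => u + 1 = s ∨ u = s + m)
      (fun x hx h => by by_contra hc; exact h (hsum0 x hx hc))]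
    rcases Nat.eq_zero_or_pos s with hs | hs
    · have ht : 1 ≤ t := by omega
      have hfil : U.filter (fun u => u + 1 = s ∨ u = s + m) = {s + m} := by
        ext x
        simp only [Finset.mem_filter, hUmem, Finset.mem_singleton]
        omega
      rw [hfil, Finset.sum_singleton, hgp ht]
      subst hs
      norm_num [Nat.choose_zero_right]
    · rcases Nat.eq_zero_or_pos t with ht | ht
      · have hfil : U.filter (fun u => u + 1 = s ∨ u = s + m) = {s - 1} := by
          ext x
          simp only [Finset.mem_filter, hUmem, Finset.mem_singleton]
          omega
        rw [hfil, Finset.sum_singleton, hgq hs]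
        subst ht
        rw [show r.choose (s - 1) = 1 from by rw [show r = s - 1 from by omega, Nat.choose_self],
          show (s + 0).choose s = 1 from by rw [Nat.add_zero, Nat.choose_self]]
      · have hfil : U.filter (fun u => u + 1 = s ∨ u = s + m) = {s - 1, s + m} := by
          ext x
          simp only [Finset.mem_filter, hUmem, Finset.mem_insert, Finset.mem_singleton]
          omega
        rw [hfil, Finset.sum_insert (by rw [Finset.mem_singleton]; omega),
          Finset.sum_singleton, hgq hs, hgp ht]
        have hch : ((s + t).choose s : ℝ) = (r.choose (s - 1) : ℝ) + (r.choose s : ℝ) := by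
          rw [← Nat.cast_add]
          congr 1
          rw [show s + t = r + 1 from by omega, show s = (s - 1) + 1 from by omega,
            Nat.choose_succ_succ]
          simp
        rw [hch]
        ring

theorem near_neighbor_ordering_sum (N : ℕ) [NeZero N] (hN : 2 ≤ N)
    (p q δ : ℝ) (hp : 0 < p) (hq : 0 < q) (β : ZMod N → ℝ) (hβ : ∀ i, 0 ≤ β i)
    (n : ℕ) (hn : 1 ≤ n) (hnN : n < N) (a : ZMod N) :
    ((((Finset.range n).image (fun k : ℕ => (a + (k : ZMod N)))).toList.permutations).map
        (fun L => contagionLhat β δ (nnRho p q) ∅ L)).sum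
      = Real.exp (-δ * ((n * (n - 1) / 2 : ℕ) : ℝ))
          * ∑ j ∈ Finset.range n,
              β (a + (j : ZMod N)) * ((n - 1).choose j : ℝ) * p ^ (n - 1 - j) * q ^ j := by
  have hrb : ∀ x ∈ Finset.range n, x < N := by
    intro x hx; rw [Finset.mem_range] at hx; omega
  have hSimg : (Finset.range n).image (fun k : ℕ => (a + (k : ZMod N)))
      = (Finset.range n).image (eo a) := rfl
  rw [hSimg, sum_permsF]
  rw [permsF_rec _ (Finset.Nonempty.image ⟨0, Finset.mem_range.mpr (by omega)⟩ _)]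
  rw [Finset.sum_image (fun x hx y hy h => injOn_eo a hrb x hx y hy h)]
  have hstep : ∀ j ∈ Finset.range n,
      (∑ T ∈ permsF (((Finset.range n).image (eo a)).erase (eo a j)),
        contagionLhat β δ (nnRho p q) ∅ (eo a j :: T))
      = Real.exp (-δ * (∑ k ∈ Finset.Ico 1 (1 + (n - 1)), (k : ℝ)))
          * (β (eo a j) * ((n - 1).choose j : ℝ) * p ^ (n - 1 - j) * q ^ j) := by
    intro j hj
    rw [Finset.mem_range] at hj
    simp only [contagionLhat]
    have hL0 : contagionL β δ (nnRho p q) ∅ (eo a j) = β (eo a j) := by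
      rw [contagionL, if_pos rfl]
    have h1 : ∀ T : List (ZMod N), insert (eo a j) (∅ : Finset (ZMod N))
        = (Finset.Ico j (j + 1)).image (eo a) := by
      intro T
      rw [Nat.Ico_succ_singleton]
      simp
    have h2 : ((Finset.range n).image (eo a)).erase (eo a j)
        = ((Finset.range j) ∪ (Finset.Ico (j + 1) (j + 1 + (n - 1 - j)))).image (eo a) := by
      rw [erase_image_eo a hrb (by omega)]
      congr 1
      ext x
      simp only [Finset.mem_erase, Finset.mem_union, Finset.mem_range, Finset.mem_Ico]
      omega
    simp only [h1 ([] : List (ZMod N)), h2, hL0]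
    rw [← Finset.mul_sum, keyC p q δ β a (j + (n - 1 - j)) j 1 (n - 1 - j) rfl (le_refl 1)
      (by omega)]
    rw [show j + (n - 1 - j) = n - 1 from by omega]
    ring
  rw [Finset.sum_congr rfl hstep, ← Finset.mul_sum]
  congr 2
  · congr 1
    rw [show 1 + (n - 1) = n from by omega]
    rw [show (∑ k ∈ Finset.Ico 1 n, (k : ℝ)) = ((∑ k ∈ Finset.Ico 1 n, k : ℕ) : ℝ) from by
      push_cast; rfl]
    congr 1
    rw [show Finset.Ico 1 n = (Finset.range n).erase 0 from by
      ext x; simp [Finset.mem_Ico, Finset.mem_erase, Finset.mem_range]; omega]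
    rw [← Finset.sum_range_id n, ← Finset.add_sum_erase (Finset.range n) (fun i => i) (a := 0)
      (Finset.mem_range.mpr (show 0 < n by omega))]
    simp
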